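/- arXiv:math/0310298 — 3 statements merged into one kernel-verified Lean document; each statement's English description precedes it below -/
import Mathlib

section
/- Define h : ℂ \ ((−∞,−1] ∪ [1,∞)) → ℂ by h(z) = (v(z) − 1)/(v(z) + 1), where v(z) is the principal branch of the square root of (1+z)/(1−z) (well defined since (1+z)/(1−z) avoids (−∞,0] on this domain). Then h is a holomorphic bijection from the doubly slit plane D_1 := ℂ \ ((−∞,−1] ∪ [1,∞)) onto the open unit disk {w ∈ ℂ : |w| < 1}, and h(0) = 0. -/
open Complex Set

noncomputable section

/-- The doubly slit plane `ℂ \ ((−∞,−r] ∪ [r,∞))`. -/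
def slitPlane2 (r : ℝ) : Set ℂ :=
  (Complex.ofReal '' (Set.Iic (-r) ∪ Set.Ici r))ᶜ

/-- The principal branch of the square root of `(1+z)/(1−z)`. -/
def vMap (z : ℂ) : ℂ := ((1 + z) / (1 - z)) ^ ((1 : ℂ) / 2)

/-- `h(z) = (v(z) − 1)/(v(z) + 1)`. -/
def hMap (z : ℂ) : ℂ := (vMap z - 1) / (vMap z + 1)

lemma mem_slitPlane2_one {z : ℂ} :
    z ∈ slitPlane2 1 ↔ ¬(z.im = 0 ∧ (z.re ≤ -1 ∨ 1 ≤ z.re)) := by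
  simp only [slitPlane2, Set.mem_compl_iff, Set.mem_image, Set.mem_union, Set.mem_Iic,
    Set.mem_Ici, not_exists]
  constructor
  · rintro h ⟨him, hre⟩
    exact h z.re ⟨hre, by simp [Complex.ext_iff, him]⟩
  · rintro h x ⟨hx, rfl⟩
    exact h ⟨by simp, by simpa using hx⟩

lemma one_sub_ne {z : ℂ} (hz : z ∈ slitPlane2 1) : (1 : ℂ) - z ≠ 0 := by
  intro h
  have : z = 1 := by linear_combination -h
  rw [mem_slitPlane2_one, this] at hz
  simp at hz

lemma mobius_re (z : ℂ) : ((1+z)/(1-z)).re = (1 - normSq z) / normSq (1-z) := by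
  rw [Complex.div_re, ← add_div]
  congr 1
  simp [Complex.normSq_apply]
  ring

lemma mobius_im (z : ℂ) : ((1+z)/(1-z)).im = 2 * z.im / normSq (1-z) := by
  rw [Complex.div_im, div_sub_div_same]
  congr 1
  simp
  ring

lemma mem_slitPlane2_iff' {z : ℂ} (hz : (1:ℂ) - z ≠ 0) :
    z ∈ slitPlane2 1 ↔ (1+z)/(1-z) ∈ Complex.slitPlane := by
  have hd : 0 < normSq (1-z) := normSq_pos.2 hz
  rw [mem_slitPlane2_one, Complex.mem_slitPlane_iff, mobius_re, mobius_im,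
    Complex.normSq_apply]
  constructor
  · intro h
    by_cases him : z.im = 0
    · left
      have h1 : ¬(z.re ≤ -1 ∨ 1 ≤ z.re) := fun hc => h ⟨him, hc⟩
      push_neg at h1
      apply div_pos _ hd
      nlinarith [h1.1, h1.2]
    · right
      intro hc
      rcases div_eq_zero_iff.1 hc with h2 | h2
      · exact him (by linarith)
      · exact hd.ne' h2
  · rintro h ⟨him, hre⟩
    rcases h with h | h
    · have h2 : 1 ≤ z.re * z.re := by rcases hre with h1 | h1 <;> nlinarith
      have : (1 - (z.re * z.re + z.im * z.im)) / normSq (1-z) ≤ 0 := by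
        apply div_nonpos_of_nonpos_of_nonneg _ hd.le
        nlinarith
      linarith
    · exact h (by rw [him]; ring_nf)

lemma re_vMap_nonneg (z : ℂ) : 0 ≤ (vMap z).re := by
  rw [vMap, one_div, Complex.cpow_inv_two_re]
  exact Real.sqrt_nonneg _

lemma re_vMap_pos {z : ℂ} (hz : z ∈ slitPlane2 1) : 0 < (vMap z).re := by
  have h1 := one_sub_ne hz
  have hw : (1+z)/(1-z) ∈ Complex.slitPlane := (mem_slitPlane2_iff' h1).1 hz
  rw [vMap, one_div, Complex.cpow_inv_two_re]
  apply Real.sqrt_pos.2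
  have habs : -((1+z)/(1-z)).re < ‖(1+z)/(1-z)‖ := by
    rcases Complex.mem_slitPlane_iff.1 hw with h | h
    · calc -((1+z)/(1-z)).re < 0 := by linarith
        _ ≤ _ := norm_nonneg _
    · calc -((1+z)/(1-z)).re ≤ |((1+z)/(1-z)).re| := neg_le_abs _
        _ < _ := Complex.abs_re_lt_norm.2 h
  linarith

lemma sq_vMap (z : ℂ) : (vMap z) ^ 2 = (1+z)/(1-z) := by
  rw [vMap]
  have : ((1 : ℂ)/2) = (((2:ℕ) : ℂ))⁻¹ := by norm_num
  rw [this]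
  exact_mod_cast Complex.cpow_nat_inv_pow _ two_ne_zero

lemma cpow_half_sq_eq {v : ℂ} (hv : 0 < v.re) : (v ^ 2) ^ ((1:ℂ)/2) = v := by
  set a := (v ^ 2) ^ ((1:ℂ)/2) with ha
  have h2 : a ^ 2 = v ^ 2 := by
    rw [ha]
    have : ((1 : ℂ)/2) = (((2:ℕ) : ℂ))⁻¹ := by norm_num
    rw [this]
    exact_mod_cast Complex.cpow_nat_inv_pow _ two_ne_zero
  have hanneg : 0 ≤ a.re := by
    rw [ha, one_div, Complex.cpow_inv_two_re]
    exact Real.sqrt_nonneg _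
  have hsum : a + v ≠ 0 := by
    intro h
    have := congrArg Complex.re h
    simp [Complex.add_re] at this
    linarith
  have : (a - v) * (a + v) = 0 := by linear_combination h2
  rcases mul_eq_zero.1 this with h | h
  · linear_combination h
  · exact absurd h hsum

lemma mobius_mem_ball {v : ℂ} (hv : 0 < v.re) :
    ‖(v - 1)/(v + 1)‖ < 1 := by
  have h1 : v + 1 ≠ 0 := by
    intro h
    have := congrArg Complex.re h
    simp at this
    linarith
  rw [norm_div, div_lt_one (norm_pos_iff.2 h1), Complex.norm_def, Complex.norm_def]
  apply Real.sqrt_lt_sqrt (normSq_nonneg _)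
  simp only [Complex.normSq_apply, Complex.sub_re, Complex.sub_im, Complex.add_re,
    Complex.add_im, Complex.one_re, Complex.one_im]
  nlinarith

lemma vMap_add_one_ne (z : ℂ) : vMap z + 1 ≠ 0 := by
  intro h
  have := congrArg Complex.re h
  simp [Complex.add_re] at this
  have := re_vMap_nonneg z
  linarith

theorem hMap_conformal_equiv_slitPlane_unitDisk :
    DifferentiableOn ℂ hMap (slitPlane2 1) ∧
    Set.BijOn hMap (slitPlane2 1) (Metric.ball (0 : ℂ) 1) ∧
    hMap 0 = 0 := by
  have h00 : hMap 0 = 0 := by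
    have : vMap 0 = 1 := by simp [vMap]
    simp [hMap, this]
  refine ⟨?_, ⟨?_, ?_, ?_⟩, h00⟩
  · -- differentiability
    intro z hz
    have h1 : (1:ℂ) - z ≠ 0 := one_sub_ne hz
    have hw : (1+z)/(1-z) ∈ Complex.slitPlane := (mem_slitPlane2_iff' h1).1 hz
    have hbase : DifferentiableAt ℂ (fun z : ℂ => (1+z)/(1-z)) z :=
      ((differentiableAt_const _).add differentiableAt_id).div
        ((differentiableAt_const _).sub differentiableAt_id) h1
    have hv : DifferentiableAt ℂ vMap z :=
      hbase.cpow (differentiableAt_const _) hw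
    have hh : DifferentiableAt ℂ hMap z :=
      (hv.sub (differentiableAt_const _)).div (hv.add (differentiableAt_const _))
        (vMap_add_one_ne z)
    exact hh.differentiableWithinAt
  · -- maps to
    intro z hz
    have := mobius_mem_ball (re_vMap_pos hz)
    simpa [hMap, Metric.mem_ball, Complex.dist_eq] using this
  · -- injective
    intro z1 hz1 z2 hz2 heq
    have hv1 := re_vMap_pos hz1
    have hv2 := re_vMap_pos hz2
    have hn1 := vMap_add_one_ne z1
    have hn2 := vMap_add_one_ne z2
    rw [hMap, hMap, div_eq_div_iff hn1 hn2] at heq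
    have hveq : vMap z1 = vMap z2 := by linear_combination heq / 2
    have hsq : (1+z1)/(1-z1) = (1+z2)/(1-z2) := by
      rw [← sq_vMap, ← sq_vMap, hveq]
    have h11 := one_sub_ne hz1
    have h12 := one_sub_ne hz2
    rw [div_eq_div_iff h11 h12] at hsq
    linear_combination hsq / 2
  · -- surjective
    intro w hw
    rw [Metric.mem_ball, Complex.dist_eq, sub_zero] at hw
    have hw1 : (1:ℂ) - w ≠ 0 := by
      intro h
      have : w = 1 := by linear_combination -h
      rw [this] at hw
      simp at hw
    set v : ℂ := (1+w)/(1-w) with hvdef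
    have hvre : 0 < v.re := by
      rw [hvdef, mobius_re]
      apply div_pos _ (normSq_pos.2 hw1)
      have : normSq w < 1 := by
        have := Complex.sq_norm w
        nlinarith [norm_nonneg w]
      linarith
    have hv21 : v^2 + 1 ≠ 0 := by
      intro h
      have hre := congrArg Complex.re h
      have him := congrArg Complex.im h
      simp [pow_two, Complex.add_re, Complex.add_im, Complex.mul_re, Complex.mul_im] at hre him
      have h2 : v.im * (2 * v.re) = 0 := by linarith
      rcases mul_eq_zero.1 h2 with h | h
      · nlinarith
      · linarith
    set z : ℂ := (v^2 - 1)/(v^2 + 1) with hzdef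
    have h1z : (1:ℂ) - z = 2/(v^2+1) := by
      rw [hzdef]; field_simp; ring
    have h1z' : (1:ℂ) + z = 2*v^2/(v^2+1) := by
      rw [hzdef]; field_simp; ring
    have h1zne : (1:ℂ) - z ≠ 0 := by
      rw [h1z]
      exact div_ne_zero two_ne_zero hv21
    have hq : (1+z)/(1-z) = v^2 := by
      rw [h1z, h1z']
      field_simp
    have hv2slit : v^2 ∈ Complex.slitPlane := by
      rw [Complex.mem_slitPlane_iff]
      by_cases him : v.im = 0
      · left
        simp [pow_two, Complex.mul_re, him]
        nlinarith
      · right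
        simp only [pow_two, Complex.mul_im]
        intro h
        have h2 : v.im * (2 * v.re) = 0 := by linarith
        rcases mul_eq_zero.1 h2 with h | h
        · exact him h
        · linarith
    have hzmem : z ∈ slitPlane2 1 := by
      rw [mem_slitPlane2_iff' h1zne, hq]
      exact hv2slit
    have hvz : vMap z = v := by
      rw [vMap, hq]
      exact cpow_half_sq_eq hvre
    refine ⟨z, hzmem, ?_⟩
    rw [hMap, hvz, hvdef]
    have hvp1 : v + 1 ≠ 0 := by
      intro h
      have := congrArg Complex.re h
      simp at this
      linarith
    rw [div_eq_iff hvp1, hvdef] at *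
    field_simp
    ring
end
end

section
/- Let U ⊆ ℂ be open, let f : ℂ → ℂ be holomorphic on U and injective on U, and let K ⊆ U be compact. Then there exists M > 0 such that for all z, w ∈ K, |f(z) − f(w)| ≥ M |z − w|. -/
open Complex Set Filter Topology

private lemma analyticAt_hasStrictDerivAt {f : ℂ → ℂ} {x : ℂ} (h : AnalyticAt ℂ f x) :
    HasStrictDerivAt f (deriv f x) x := by
  obtain ⟨p, hp⟩ := h
  exact hp.deriv ▸ hp.hasStrictDerivAt

/-- An injective holomorphic function has nonvanishing derivative. -/
private lemma key_deriv_ne_zero {U : Set ℂ} (hU : IsOpen U) {f : ℂ → ℂ}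
    (hf : DifferentiableOn ℂ f U) (hinj : Set.InjOn f U) {z₀ : ℂ} (hz₀ : z₀ ∈ U) :
    deriv f z₀ ≠ 0 := by
  intro hd0
  have hfa : AnalyticAt ℂ f z₀ := hf.analyticAt (hU.mem_nhds hz₀)
  set g : ℂ → ℂ := fun z => f z - f z₀ with hgdef
  have hg : AnalyticAt ℂ g z₀ := hfa.sub analyticAt_const
  -- the order of g at z₀ is finite
  have horder_ne_top : analyticOrderAt g z₀ ≠ ⊤ := by
    intro htop
    have hev := analyticOrderAt_eq_top.mp htop
    have h2 : ∀ᶠ z in 𝓝[≠] z₀, g z = 0 ∧ z ∈ U :=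
      (hev.and (hU.mem_nhds hz₀ : U ∈ 𝓝 z₀)).filter_mono nhdsWithin_le_nhds
    obtain ⟨z, ⟨hz0, hzU⟩, hzne⟩ := (h2.and eventually_mem_nhdsWithin).exists
    have : f z = f z₀ := by simpa [hgdef, sub_eq_zero] using hz0
    exact hzne (hinj hzU hz₀ this)
  obtain ⟨n, hn⟩ := WithTop.ne_top_iff_exists.mp horder_ne_top
  obtain ⟨h, hh, hh0, hrep⟩ := (hg.analyticOrderAt_eq_natCast (n := n)).mp hn.symm
  -- n ≠ 0
  have hn0 : n ≠ 0 := by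
    intro h0
    have := hrep.self_of_nhds
    simp [h0, hgdef] at this
    exact hh0 this.symm
  -- n ≠ 1
  have hn1 : n ≠ 1 := by
    intro h1
    have hdg : deriv g z₀ = 0 := by
      have : deriv g z₀ = deriv f z₀ := by
        simp only [hgdef]
        exact deriv_sub_const (f z₀)
      rw [this, hd0]
    have hp : HasDerivAt (fun z => (z - z₀) ^ n • h z) (h z₀) z₀ := by
      have h1' : HasDerivAt (fun z : ℂ => z - z₀) 1 z₀ := (hasDerivAt_id z₀).sub_const z₀
      have h2' : HasDerivAt h (deriv h z₀) z₀ := hh.differentiableAt.hasDerivAt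
      have : HasDerivAt (fun y => (y - z₀) * h y) (1 * h z₀ + (z₀ - z₀) * deriv h z₀) z₀ := h1'.mul h2'
      simp only [h1, pow_one, smul_eq_mul]
      simpa using this
    have : deriv g z₀ = h z₀ := by
      have hgp : g =ᶠ[𝓝 z₀] fun z => (z - z₀) ^ n • h z := hrep
      rw [hgp.deriv_eq]
      exact hp.deriv
    rw [hdg] at this
    exact hh0 this.symm
  have hn2 : 2 ≤ n := by omega
  have hnC : (n : ℂ) ≠ 0 := Nat.cast_ne_zero.mpr hn0
  -- build an analytic n-th root r of h near z₀
  set c : ℂ := h z₀ with hcdef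
  have hc : c ≠ 0 := hh0
  set r : ℂ → ℂ := fun z => Complex.exp ((Complex.log (h z / c) + Complex.log c) / n) with hrdef
  have hdivc : AnalyticAt ℂ (fun z => h z / c) z₀ := hh.div analyticAt_const hc
  have hone : h z₀ / c = 1 := div_self hc
  have hr_an : AnalyticAt ℂ r z₀ := by
    apply AnalyticAt.cexp
    exact ((hdivc.clog (by rw [hone]; exact one_mem_slitPlane)).add analyticAt_const).div
      analyticAt_const hnC
  have hrne : r z₀ ≠ 0 := Complex.exp_ne_zero _
  -- φ z = (z - z₀) * r z has nonzero strict derivative at z₀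
  set φ : ℂ → ℂ := fun z => (z - z₀) * r z with hφdef
  have hφ : HasStrictDerivAt φ (r z₀) z₀ := by
    have h1' : HasStrictDerivAt (fun z : ℂ => z - z₀) 1 z₀ := (hasStrictDerivAt_id z₀).sub_const z₀
    have h2' : HasStrictDerivAt r (deriv r z₀) z₀ := analyticAt_hasStrictDerivAt hr_an
    have : HasStrictDerivAt (fun y => (y - z₀) * r y) (1 * r z₀ + (z₀ - z₀) * deriv r z₀) z₀ := h1'.mul h2'
    simpa using this
  have hφ0 : φ z₀ = 0 := by simp [hφdef]
  have hmap : map φ (𝓝 z₀) = 𝓝 0 := by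
    have := hφ.map_nhds_eq hrne
    rwa [hφ0] at this
  -- eventually, r z ^ n = h z
  have Ehc : ∀ᶠ z in 𝓝 z₀, h z ≠ 0 ∧ h z / c ∈ slitPlane := by
    have c1 : ContinuousAt h z₀ := hh.continuousAt
    have e1 : ∀ᶠ z in 𝓝 z₀, h z ≠ 0 := c1.eventually_ne hh0
    have c2 : ContinuousAt (fun z => h z / c) z₀ := c1.div continuousAt_const hc
    have e2 : ∀ᶠ z in 𝓝 z₀, h z / c ∈ slitPlane := by
      have hm : h z₀ / c ∈ slitPlane := by rw [hone]; exact one_mem_slitPlane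
      exact c2.eventually (isOpen_slitPlane.eventually_mem hm)
    exact e1.and e2
  have Erpow : ∀ᶠ z in 𝓝 z₀, r z ^ n = h z := by
    filter_upwards [Ehc] with z hz
    obtain ⟨hz0, hzslit⟩ := hz
    have hdiv0 : h z / c ≠ 0 := div_ne_zero hz0 hc
    calc r z ^ n = Complex.exp ((n : ℂ) * ((Complex.log (h z / c) + Complex.log c) / n)) := by
          rw [Complex.exp_nat_mul]
      _ = Complex.exp (Complex.log (h z / c) + Complex.log c) := by
          rw [mul_div_cancel₀ _ hnC]
      _ = (h z / c) * c := by
          rw [Complex.exp_add, Complex.exp_log hdiv0, Complex.exp_log hc]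
      _ = h z := div_mul_cancel₀ _ hc
  -- set where everything holds
  have hS : {z | g z = (z - z₀) ^ n • h z ∧ r z ^ n = h z ∧ z ∈ U} ∈ 𝓝 z₀ :=
    hrep.and (Erpow.and (hU.mem_nhds hz₀))
  have himg : φ '' {z | g z = (z - z₀) ^ n • h z ∧ r z ^ n = h z ∧ z ∈ U} ∈ 𝓝 (0 : ℂ) := by
    rw [← hmap]
    exact image_mem_map hS
  obtain ⟨ε, hε, hball⟩ := Metric.mem_nhds_iff.mp himg
  -- the root of unity
  set θ : ℝ := 2 * Real.pi / n with hθdef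
  set ζ : ℂ := Complex.exp (θ * I) with hζdef
  have hθn : (n : ℂ) * (θ : ℂ) = 2 * Real.pi := by
    rw [hθdef]
    push_cast
    field_simp
  have hζn : ζ ^ n = 1 := by
    rw [hζdef, ← Complex.exp_nat_mul, ← mul_assoc, hθn]
    simpa using Complex.exp_two_pi_mul_I
  have hζ1 : ζ ≠ 1 := by
    intro hone'
    rw [hζdef, Complex.exp_eq_one_iff] at hone'
    obtain ⟨k, hk⟩ := hone'
    have h2pi : (2 * (Real.pi : ℂ) * I) ≠ 0 := by
      simp [Real.pi_ne_zero, Complex.I_ne_zero]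
    have hmul : (1 : ℂ) * (2 * (Real.pi : ℂ) * I) = ((k : ℂ) * n) * (2 * (Real.pi : ℂ) * I) := by
      rw [one_mul]
      have : ((θ : ℂ)) * I * n = (k : ℂ) * (2 * Real.pi * I) * n := by rw [hk]
      calc 2 * (Real.pi : ℂ) * I = (n : ℂ) * (θ : ℂ) * I := by rw [hθn]
        _ = ((θ : ℂ)) * I * n := by ring
        _ = (k : ℂ) * (2 * Real.pi * I) * n := by rw [hk]
        _ = ((k : ℂ) * n) * (2 * (Real.pi : ℂ) * I) := by ring
    have h1kn : (1 : ℂ) = (k : ℂ) * n := mul_right_cancel₀ h2pi hmul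
    have h1kn' : (1 : ℤ) = k * n := by exact_mod_cast h1kn
    have hnZ : (2 : ℤ) ≤ (n : ℤ) := by exact_mod_cast hn2
    rcases le_or_gt k 0 with hk' | hk'
    · nlinarith
    · nlinarith
  have hζabs : ‖ζ‖ = 1 := Complex.norm_exp_ofReal_mul_I θ
  -- choose w and ζ w in the image of φ
  set w : ℂ := ((ε / 2 : ℝ) : ℂ) with hwdef
  have hw0 : w ≠ 0 := by
    simp only [hwdef, ne_eq, Complex.ofReal_eq_zero]
    linarith
  have hwabs : ‖w‖ = ε / 2 := by
    rw [hwdef, Complex.norm_real, Real.norm_eq_abs, abs_of_pos (by linarith)]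
  have hwball : w ∈ Metric.ball (0 : ℂ) ε := by
    rw [Metric.mem_ball, dist_zero_right, hwabs]
    linarith
  have hzwball : ζ * w ∈ Metric.ball (0 : ℂ) ε := by
    rw [Metric.mem_ball, dist_zero_right, norm_mul, hζabs, one_mul, hwabs]
    linarith
  obtain ⟨z₁, hz₁S, hφz₁⟩ := hball hwball
  obtain ⟨z₂, hz₂S, hφz₂⟩ := hball hzwball
  obtain ⟨hg₁, hr₁, hU₁⟩ := hz₁S
  obtain ⟨hg₂, hr₂, hU₂⟩ := hz₂S
  have hgz₁ : g z₁ = w ^ n := by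
    rw [hg₁, smul_eq_mul, ← hr₁, ← mul_pow]
    rw [← hφz₁]
  have hgz₂ : g z₂ = w ^ n := by
    rw [hg₂, smul_eq_mul, ← hr₂, ← mul_pow]
    show φ z₂ ^ n = w ^ n
    rw [hφz₂, mul_pow, hζn, one_mul]
  have hfeq : f z₁ = f z₂ := by
    have : g z₁ = g z₂ := by rw [hgz₁, hgz₂]
    simpa [hgdef, sub_left_inj] using this
  have hz12 : z₁ = z₂ := hinj hU₁ hU₂ hfeq
  have : w = ζ * w := by
    have h12 : φ z₁ = φ z₂ := by rw [hz12]
    rw [hφz₁, hφz₂] at h12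
    exact h12
  have : (1 - ζ) * w = 0 := by ring_nf; linear_combination this
  rcases mul_eq_zero.mp this with h' | h'
  · exact hζ1 (by linear_combination -h')
  · exact hw0 h'

theorem injective_holomorphic_bilipschitz_below_on_compact
    {U : Set ℂ} (hU : IsOpen U) (f : ℂ → ℂ)
    (hf : DifferentiableOn ℂ f U) (hinj : Set.InjOn f U)
    {K : Set ℂ} (hK : IsCompact K) (hKU : K ⊆ U) :
    ∃ M : ℝ, 0 < M ∧ ∀ z ∈ K, ∀ w ∈ K,
      M * ‖z - w‖ ≤ ‖f z - f w‖ := by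
  rcases K.eq_empty_or_nonempty with hKe | hKne
  · exact ⟨1, one_pos, by simp [hKe]⟩
  -- the difference quotient function
  set q : ℂ × ℂ → ℂ := fun p => if p.1 = p.2 then deriv f p.1 else (f p.1 - f p.2) / (p.1 - p.2)
    with hqdef
  have hana : AnalyticOnNhd ℂ f U := hf.analyticOnNhd hU
  have hderivc : ContinuousOn (deriv f) U := fun z hz => ((hana.deriv z hz).continuousAt).continuousWithinAt
  -- continuity of q on K ×ˢ K
  have hqcont : ContinuousOn q (K ×ˢ K) := by
    rintro ⟨a, b⟩ ⟨haK, hbK⟩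
    rcases eq_or_ne a b with rfl | hab
    · -- diagonal point : use strict differentiability
      apply ContinuousAt.continuousWithinAt
      have hfa : AnalyticAt ℂ f a := hf.analyticAt (hU.mem_nhds (hKU haK))
      have hs : HasStrictDerivAt f (deriv f a) a := analyticAt_hasStrictDerivAt hfa
      have hO : (fun p : ℂ × ℂ => f p.1 - f p.2 - (p.1 - p.2) * deriv f a) =o[𝓝 (a, a)]
          fun p : ℂ × ℂ => p.1 - p.2 := by
        have := hs.isLittleO
        simpa [smul_eq_mul, mul_comm] using this
      have hdc : ContinuousAt (deriv f) a := (hana.deriv a (hKU haK)).continuousAt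
      rw [ContinuousAt, Metric.tendsto_nhds]
      intro ε hε
      have hq_aa : q (a, a) = deriv f a := by simp [hqdef]
      rw [hq_aa]
      have h1 : ∀ᶠ p : ℂ × ℂ in 𝓝 (a, a),
          ‖f p.1 - f p.2 - (p.1 - p.2) * deriv f a‖ ≤ (ε / 2) * ‖p.1 - p.2‖ :=
        hO.def (by linarith)
      have h2 : ∀ᶠ p : ℂ × ℂ in 𝓝 (a, a), dist (deriv f p.1) (deriv f a) < ε := by
        have : Tendsto (fun p : ℂ × ℂ => deriv f p.1) (𝓝 (a, a)) (𝓝 (deriv f a)) := by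
          exact hdc.comp (x := (a, a)) (continuousAt_fst)
        exact this.eventually (Metric.ball_mem_nhds _ hε)
      filter_upwards [h1, h2] with p hp1 hp2
      rcases eq_or_ne p.1 p.2 with hp | hp
      · have : q p = deriv f p.1 := by simp [hqdef, hp]
        rw [this]
        exact hp2
      · have hq : q p = (f p.1 - f p.2) / (p.1 - p.2) := by simp [hqdef, hp]
        have hsub : p.1 - p.2 ≠ 0 := sub_ne_zero.mpr hp
        rw [dist_eq_norm, hq]
        have : (f p.1 - f p.2) / (p.1 - p.2) - deriv f a
            = (f p.1 - f p.2 - (p.1 - p.2) * deriv f a) / (p.1 - p.2) := by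
          field_simp
        rw [this, norm_div]
        have hpos : (0 : ℝ) < ‖p.1 - p.2‖ := norm_pos_iff.mpr hsub
        rw [div_lt_iff₀ hpos]
        calc ‖f p.1 - f p.2 - (p.1 - p.2) * deriv f a‖ ≤ (ε / 2) * ‖p.1 - p.2‖ := hp1
          _ < ε * ‖p.1 - p.2‖ := by
            apply mul_lt_mul_of_pos_right _ hpos
            linarith
    · -- off-diagonal point
      apply ContinuousAt.continuousWithinAt
      have hfa : ContinuousAt f a :=
        (hf.differentiableAt (hU.mem_nhds (hKU haK))).continuousAt
      have hfb : ContinuousAt f b :=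
        (hf.differentiableAt (hU.mem_nhds (hKU hbK))).continuousAt
      have hcont : ContinuousAt (fun p : ℂ × ℂ => (f p.1 - f p.2) / (p.1 - p.2)) (a, b) := by
        apply ContinuousAt.div
        · exact (hfa.comp continuousAt_fst).sub (hfb.comp continuousAt_snd)
        · exact continuousAt_fst.sub continuousAt_snd
        · exact sub_ne_zero.mpr hab
      apply hcont.congr
      have hopen : IsOpen {p : ℂ × ℂ | p.1 ≠ p.2} := isOpen_ne_fun continuous_fst continuous_snd
      filter_upwards [hopen.mem_nhds (by exact hab : (a, b) ∈ {p : ℂ × ℂ | p.1 ≠ p.2})] with p hp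
      simp [hqdef, hp]
  -- minimum of ‖q‖ on the compact set K ×ˢ K
  have hKK : IsCompact (K ×ˢ K) := hK.prod hK
  have hKKne : (K ×ˢ K).Nonempty := hKne.prod hKne
  obtain ⟨p₀, hp₀, hmin⟩ := hKK.exists_isMinOn hKKne (continuous_norm.comp_continuousOn hqcont)
  have hq0 : q p₀ ≠ 0 := by
    obtain ⟨hp₀1, hp₀2⟩ := hp₀
    rcases eq_or_ne p₀.1 p₀.2 with hp | hp
    · have : q p₀ = deriv f p₀.1 := by simp [hqdef, hp]
      rw [this]
      exact key_deriv_ne_zero hU hf hinj (hKU hp₀1)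
    · have : q p₀ = (f p₀.1 - f p₀.2) / (p₀.1 - p₀.2) := by simp [hqdef, hp]
      rw [this]
      apply div_ne_zero
      · rw [sub_ne_zero]
        intro hfe
        exact hp (hinj (hKU hp₀1) (hKU hp₀2) hfe)
      · exact sub_ne_zero.mpr hp
  refine ⟨‖q p₀‖, norm_pos_iff.mpr hq0, fun z hz w hw => ?_⟩
  rcases eq_or_ne z w with rfl | hzw
  · simp
  · have hqzw : q (z, w) = (f z - f w) / (z - w) := by simp [hqdef, hzw]
    have hle : ‖q p₀‖ ≤ ‖q (z, w)‖ := hmin (⟨hz, hw⟩ : (z, w) ∈ K ×ˢ K)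
    have hsub : z - w ≠ 0 := sub_ne_zero.mpr hzw
    have habs : ‖f z - f w‖ = ‖q (z, w)‖ * ‖z - w‖ := by
      rw [hqzw, norm_div,
        div_mul_cancel₀ _ (norm_ne_zero_iff.mpr hsub)]
    rw [habs]
    apply mul_le_mul_of_nonneg_right hle (norm_nonneg _)
end

section
/- Define h : (−1,1) → ℝ by h(x) = (√((1+x)/(1−x)) − 1)/(√((1+x)/(1−x)) + 1). There exists a constant A < ∞ such that for every r_3 ≥ 2 and every x_0 ∈ ℝ with |x_0| < r_3, one has −∫_{−1}^{1} (1/π) log |h(z/r_3) − h(x_0/r_3)| dz ≤ (2/π) log r_3 + A. -/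
open Real Set

noncomputable section

/-- `h(x) = (√((1+x)/(1−x)) − 1)/(√((1+x)/(1−x)) + 1)`. -/
def hFun (x : ℝ) : ℝ :=
  (Real.sqrt ((1 + x) / (1 - x)) - 1) / (Real.sqrt ((1 + x) / (1 - x)) + 1)

lemma mul_log_ge (t : ℝ) (ht : 0 ≤ t) : t - 1 ≤ t * Real.log t := by
  rcases eq_or_lt_of_le ht with h | h
  · simp [← h]
  · have h1 : Real.log t⁻¹ ≤ t⁻¹ - 1 := Real.log_le_sub_one_of_pos (by positivity)
    rw [Real.log_inv] at h1
    have h2 : 1 - t⁻¹ ≤ Real.log t := by linarith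
    have h3 : t * (1 - t⁻¹) ≤ t * Real.log t := mul_le_mul_of_nonneg_left h2 ht
    have h4 : t * (1 - t⁻¹) = t - 1 := by field_simp
    linarith

lemma lem2 (u w : ℝ) (hw : 0 ≤ w) (hu1 : 1 ≤ u) (hwu : w ≤ u) :
    w * Real.log w ≤ u * Real.log u := by
  rcases le_total w 1 with h | h
  · have h1 : w * Real.log w ≤ 0 :=
      mul_nonpos_iff.mpr (Or.inl ⟨hw, Real.log_nonpos hw h⟩)
    have h2 : 0 ≤ u * Real.log u := mul_nonneg (by linarith) (Real.log_nonneg hu1)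
    linarith
  · calc w * Real.log w ≤ u * Real.log w :=
        mul_le_mul_of_nonneg_right hwu (Real.log_nonneg h)
      _ ≤ u * Real.log u :=
        mul_le_mul_of_nonneg_left (Real.log_le_log (by linarith) hwu) (by linarith)

lemma lem0 (c : ℝ) : 0 ≤ (1 - c) * Real.log (1 - c) + (1 + c) * Real.log (1 + c) := by
  suffices H : ∀ c : ℝ, 0 ≤ c → 0 ≤ (1 - c) * Real.log (1 - c) + (1 + c) * Real.log (1 + c) by
    rcases le_total 0 c with h | h
    · exact H c h
    · have h1 := H (-c) (by linarith)
      have e1 : (1 : ℝ) - -c = 1 + c := by ring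
      have e2 : (1 : ℝ) + -c = 1 - c := by ring
      rw [e1, e2] at h1
      linarith
  intro c hc
  rcases le_total c 1 with h1 | h1
  · have t1 := mul_log_ge (1 - c) (by linarith)
    have t2 := mul_log_ge (1 + c) (by linarith)
    linarith
  · have e : (1 : ℝ) - c = -(c - 1) := by ring
    rw [e, Real.log_neg_eq_log]
    have h2 := lem2 (1 + c) (c - 1) (by linarith) (by linarith) (by linarith)
    nlinarith [h2]

lemma logII (a b : ℝ) : IntervalIntegrable Real.log MeasureTheory.volume a b := by
  suffices H : ∀ c : ℝ, 0 ≤ c → IntervalIntegrable Real.log MeasureTheory.volume 0 c by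
    have H' : ∀ c : ℝ, IntervalIntegrable Real.log MeasureTheory.volume 0 c := by
      intro c
      rcases le_total 0 c with h | h
      · exact H c h
      · have h2 := H (-c) (by linarith)
        have h3 := (IntervalIntegrable.iff_comp_neg (by simp)).mp h2
        simp only [neg_zero, neg_neg] at h3
        have h4 : (fun x : ℝ => Real.log (-x)) = Real.log := funext fun x => Real.log_neg_eq_log x
        rwa [h4] at h3
    exact (H' a).symm.trans (H' b)
  intro c hc
  have hg : IntervalIntegrable
      (fun x : ℝ => 2 * x ^ (-(1/2) : ℝ) + 2 * x ^ ((1/2) : ℝ)) MeasureTheory.volume 0 c :=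
    ((intervalIntegral.intervalIntegrable_rpow' (by norm_num)).const_mul 2).add
      ((intervalIntegral.intervalIntegrable_rpow' (by norm_num)).const_mul 2)
  apply hg.mono_fun' Real.measurable_log.aestronglyMeasurable
  rw [uIoc_of_le hc]
  filter_upwards [MeasureTheory.ae_restrict_mem measurableSet_Ioc] with x hx
  have hx0 : 0 < x := hx.1
  have b1 : Real.log x ≤ 2 * x ^ ((1/2) : ℝ) := by
    have h := Real.log_le_rpow_div hx0.le (by norm_num : (0:ℝ) < 1/2)
    have h2 : x ^ ((1/2) : ℝ) / (1/2) = 2 * x ^ ((1/2) : ℝ) := by ring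
    linarith
  have b2 : -Real.log x ≤ 2 * x ^ (-(1/2) : ℝ) := by
    have h := Real.log_le_rpow_div (x := x⁻¹) (by positivity) (by norm_num : (0:ℝ) < 1/2)
    rw [Real.log_inv] at h
    have h2 : (x⁻¹) ^ ((1/2) : ℝ) = x ^ (-(1/2) : ℝ) := by
      rw [Real.inv_rpow hx0.le, ← Real.rpow_neg hx0.le]
    rw [h2] at h
    have h3 : x ^ (-(1/2) : ℝ) / (1/2) = 2 * x ^ (-(1/2) : ℝ) := by ring
    linarith
  have hpos1 : 0 ≤ x ^ ((1/2) : ℝ) := Real.rpow_nonneg hx0.le _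
  have hpos2 : 0 ≤ x ^ (-(1/2) : ℝ) := Real.rpow_nonneg hx0.le _
  rw [Real.norm_eq_abs]
  rcases abs_cases (Real.log x) with ⟨h, _⟩ | ⟨h, _⟩ <;> rw [h] <;> linarith

lemma integral_log0 (c : ℝ) : ∫ x in (0:ℝ)..c, Real.log x = c * Real.log c - c := by
  suffices H : ∀ c : ℝ, 0 ≤ c → ∫ x in (0:ℝ)..c, Real.log x = c * Real.log c - c by
    rcases le_total 0 c with h | h
    · exact H c h
    · have h2 := H (-c) (by linarith)
      have h3 : (∫ x in (0:ℝ)..c, Real.log x) = ∫ x in (0:ℝ)..c, Real.log (-x) := by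
        apply intervalIntegral.integral_congr
        intro x _
        exact (Real.log_neg_eq_log x).symm
      rw [h3, intervalIntegral.integral_comp_neg (fun x => Real.log x), neg_zero,
        intervalIntegral.integral_symm, h2, Real.log_neg_eq_log]
      ring
  intro c hc
  rcases eq_or_lt_of_le hc with h | h
  · simp [← h]
  · have key := intervalIntegral.integral_eq_sub_of_hasDeriv_right_of_le
      (f := fun x => x * Real.log x - x) (f' := Real.log) hc (by fun_prop) ?_ (logII 0 c)
    · rw [key]; simp
    · intro x hx
      have hd : HasDerivAt (fun x : ℝ => x * Real.log x - x) (Real.log x) x := by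
        have := (Real.hasDerivAt_mul_log (ne_of_gt hx.1)).sub (hasDerivAt_id x)
        exact this.congr_deriv (by ring)
      exact hd.hasDerivWithinAt

lemma integral_log' (a b : ℝ) :
    ∫ x in a..b, Real.log x = b * Real.log b - a * Real.log a - b + a := by
  have h := intervalIntegral.integral_add_adjacent_intervals (logII a 0) (logII 0 b)
  have h1 : (∫ x in a..(0:ℝ), Real.log x) = -(a * Real.log a - a) := by
    rw [intervalIntegral.integral_symm, integral_log0]
  rw [← h, h1, integral_log0]
  ring

lemma hFun_sub (a b : ℝ) (ha : a ∈ Set.Ioo (-1:ℝ) 1) (hb : b ∈ Set.Ioo (-1:ℝ) 1) (hab : b ≤ a) :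
    (a - b) / 9 ≤ hFun a - hFun b := by
  obtain ⟨ha1, ha2⟩ := ha
  obtain ⟨hb1, hb2⟩ := hb
  have ha1' : 0 < 1 + a := by linarith
  have ha2' : 0 < 1 - a := by linarith
  have hb1' : 0 < 1 + b := by linarith
  have hb2' : 0 < 1 - b := by linarith
  set p := Real.sqrt ((1 + a) / (1 - a)) with hpdef
  set q := Real.sqrt ((1 + b) / (1 - b)) with hqdef
  have hp0 : 0 < p := Real.sqrt_pos.mpr (by positivity)
  have hq0 : 0 < q := Real.sqrt_pos.mpr (by positivity)
  have hp2 : p ^ 2 = (1 + a) / (1 - a) := Real.sq_sqrt (by positivity)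
  have hq2 : q ^ 2 = (1 + b) / (1 - b) := Real.sq_sqrt (by positivity)
  have ha' : a = (p ^ 2 - 1) / (p ^ 2 + 1) := by
    rw [hp2]
    field_simp
    ring
  have hb' : b = (q ^ 2 - 1) / (q ^ 2 + 1) := by
    rw [hq2]
    field_simp
    ring
  have hpq : q ≤ p := by
    apply Real.sqrt_le_sqrt
    rw [div_le_div_iff₀ hb2' ha2']
    nlinarith
  have hH : hFun a - hFun b = 2 * (p - q) / ((p + 1) * (q + 1)) := by
    show (p - 1) / (p + 1) - (q - 1) / (q + 1) = _
    field_simp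
    ring
  rw [hH, ha', hb']
  rw [div_sub_div _ _ (by positivity) (by positivity), div_div,
    div_le_div_iff₀ (by positivity) (by positivity)]
  have E : 0 ≤ 9 * (p ^ 2 + 1) * (q ^ 2 + 1) - 2 * (p + q) * ((p + 1) * (q + 1)) := by
    nlinarith [sq_nonneg (p - q), sq_nonneg (p * q - 1), sq_nonneg (p - 1), sq_nonneg (q - 1),
      mul_nonneg hp0.le hq0.le, sq_nonneg (p * q - p), sq_nonneg (p * q - q), hp0.le, hq0.le,
      mul_nonneg (mul_nonneg hp0.le hq0.le) hp0.le, mul_nonneg (mul_nonneg hp0.le hq0.le) hq0.le]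
  nlinarith [mul_nonneg (sub_nonneg.mpr hpq) E, mul_nonneg hp0.le hq0.le,
    mul_nonneg (mul_nonneg hp0.le hq0.le) (sub_nonneg.mpr hpq),
    mul_nonneg (sub_nonneg.mpr hpq) (mul_nonneg hp0.le hq0.le)]

lemma lipLower (a b : ℝ) (ha : a ∈ Set.Ioo (-1:ℝ) 1) (hb : b ∈ Set.Ioo (-1:ℝ) 1) :
    |a - b| / 9 ≤ |hFun a - hFun b| := by
  rcases le_total b a with h | h
  · have h2 := hFun_sub a b ha hb h
    have h3 : (0:ℝ) ≤ (a - b) / 9 := div_nonneg (by linarith) (by norm_num)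
    rw [abs_of_nonneg (by linarith : (0:ℝ) ≤ a - b), abs_of_nonneg (by linarith)]
    exact h2
  · have h2 := hFun_sub b a hb ha h
    have h3 : (0:ℝ) ≤ (b - a) / 9 := div_nonneg (by linarith) (by norm_num)
    rw [abs_sub_comm a b, abs_sub_comm (hFun a),
      abs_of_nonneg (by linarith : (0:ℝ) ≤ b - a), abs_of_nonneg (by linarith)]
    exact h2

theorem log_integral_bound_for_hFun :
    ∃ A : ℝ, ∀ r₃ : ℝ, 2 ≤ r₃ → ∀ x₀ : ℝ, |x₀| < r₃ →
      -∫ z in (-1 : ℝ)..1, (1 / Real.pi) * Real.log |hFun (z / r₃) - hFun (x₀ / r₃)|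
        ≤ (2 / Real.pi) * Real.log r₃ + A := by
  refine ⟨(2 + 2 * Real.log 9) / Real.pi, ?_⟩
  intro r₃ hr x₀ hx
  have hπ : (0:ℝ) < Real.pi := Real.pi_pos
  have hr0 : (0:ℝ) < r₃ := by linarith
  have hlogr : 0 < Real.log r₃ := Real.log_pos (by linarith)
  have hlog9 : 0 < Real.log 9 := Real.log_pos (by norm_num)
  by_cases hint : IntervalIntegrable
      (fun z => (1 / Real.pi) * Real.log |hFun (z / r₃) - hFun (x₀ / r₃)|)
      MeasureTheory.volume (-1) 1
  · have h1 : IntervalIntegrable (fun z => Real.log (z - x₀)) MeasureTheory.volume (-1) 1 := by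
      have h := (logII (-1 - x₀) (1 - x₀)).comp_sub_right x₀
      have e1 : -1 - x₀ + x₀ = (-1 : ℝ) := by ring
      have e2 : 1 - x₀ + x₀ = (1 : ℝ) := by ring
      rwa [e1, e2] at h
    set G : ℝ → ℝ := fun z => 1 / Real.pi * (Real.log (z - x₀) - Real.log (9 * r₃)) with hGdef
    have hG : IntervalIntegrable G MeasureTheory.volume (-1) 1 :=
      (h1.sub intervalIntegrable_const).const_mul _
    have hpt : ∀ z ∈ Set.Icc (-1:ℝ) 1,
        G z ≤ 1 / Real.pi * Real.log |hFun (z / r₃) - hFun (x₀ / r₃)| := by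
      intro z hz
      obtain ⟨hz1, hz2⟩ := hz
      have haz : z / r₃ ∈ Set.Ioo (-1:ℝ) 1 := by
        constructor
        · rw [lt_div_iff₀ hr0]; nlinarith
        · rw [div_lt_iff₀ hr0]; nlinarith
      have hbz : x₀ / r₃ ∈ Set.Ioo (-1:ℝ) 1 := by
        obtain ⟨hx1, hx2⟩ := abs_lt.mp hx
        constructor
        · rw [lt_div_iff₀ hr0]; nlinarith
        · rw [div_lt_iff₀ hr0]; nlinarith
      have key := lipLower (z / r₃) (x₀ / r₃) haz hbz
      have habs : |z / r₃ - x₀ / r₃| = |z - x₀| / r₃ := by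
        rw [div_sub_div_same, abs_div, abs_of_pos hr0]
      rw [habs, div_div] at key
      apply mul_le_mul_of_nonneg_left _ (by positivity : (0:ℝ) ≤ 1 / Real.pi)
      rcases eq_or_ne z x₀ with he | he
      · rw [he]
        simp only [sub_self, Real.log_zero, abs_zero]
        have h9 : (0:ℝ) ≤ Real.log (9 * r₃) := Real.log_nonneg (by linarith)
        linarith
      · have hzx : 0 < |z - x₀| := abs_pos.mpr (sub_ne_zero.mpr he)
        have h9 : (0:ℝ) < 9 * r₃ := by linarith
        calc Real.log (z - x₀) - Real.log (9 * r₃)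
            = Real.log |z - x₀| - Real.log (9 * r₃) := by rw [Real.log_abs]
          _ = Real.log (|z - x₀| / (9 * r₃)) := (Real.log_div hzx.ne' h9.ne').symm
          _ ≤ Real.log |hFun (z / r₃) - hFun (x₀ / r₃)| := by
              apply Real.log_le_log (by positivity)
              rw [mul_comm 9 r₃]
              exact key
    have hmono := intervalIntegral.integral_mono_on (by norm_num : (-1:ℝ) ≤ 1) hG hint hpt
    have hGval : (∫ z in (-1:ℝ)..1, G z)
        = 1 / Real.pi * (((1 - x₀) * Real.log (1 - x₀) - (-1 - x₀) * Real.log (-1 - x₀)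
            - (1 - x₀) + (-1 - x₀)) - 2 * Real.log (9 * r₃)) := by
      rw [hGdef]
      rw [intervalIntegral.integral_const_mul,
        intervalIntegral.integral_sub h1 intervalIntegrable_const,
        intervalIntegral.integral_const]
      have hcomp : (∫ z in (-1:ℝ)..1, Real.log (z - x₀))
          = ∫ u in (-1 - x₀)..(1 - x₀), Real.log u :=
        intervalIntegral.integral_comp_sub_right (fun u => Real.log u) x₀
      rw [hcomp, integral_log']
      rw [smul_eq_mul]
      ring
    have e9 : Real.log (9 * r₃) = Real.log 9 + Real.log r₃ := Real.log_mul (by norm_num) hr0.ne'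
    have hV : -2 ≤ (1 - x₀) * Real.log (1 - x₀) - (-1 - x₀) * Real.log (-1 - x₀)
        - (1 - x₀) + (-1 - x₀) := by
      have e : Real.log (-1 - x₀) = Real.log (1 + x₀) := by
        rw [show (-1 - x₀ : ℝ) = -(1 + x₀) by ring, Real.log_neg_eq_log]
      rw [e]
      have h0 := lem0 x₀
      linarith
    have hfin : -(∫ z in (-1:ℝ)..1, G z)
        ≤ 2 / Real.pi * Real.log r₃ + (2 + 2 * Real.log 9) / Real.pi := by
      rw [hGval]
      set V := (1 - x₀) * Real.log (1 - x₀) - (-1 - x₀) * Real.log (-1 - x₀)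
          - (1 - x₀) + (-1 - x₀) with hVdef
      calc -(1 / Real.pi * (V - 2 * Real.log (9 * r₃)))
          = 1 / Real.pi * (2 * Real.log (9 * r₃) - V) := by ring
        _ ≤ 1 / Real.pi * (2 * Real.log r₃ + (2 + 2 * Real.log 9)) := by
            apply mul_le_mul_of_nonneg_left _ (by positivity : (0:ℝ) ≤ 1 / Real.pi)
            rw [e9]
            linarith
        _ = 2 / Real.pi * Real.log r₃ + (2 + 2 * Real.log 9) / Real.pi := by ring
    linarith
  · rw [intervalIntegral.integral_undef hint]
    have h1 : 0 ≤ 2 / Real.pi * Real.log r₃ := mul_nonneg (by positivity) hlogr.le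
    have h2 : 0 ≤ (2 + 2 * Real.log 9) / Real.pi := div_nonneg (by linarith) hπ.le
    simp only [neg_zero]
    linarith
end
end
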